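/- Let A be a 0-1 matrix admitting a 1D voter-candidate interval explanation with rows and columns permuted and 0-entries labeled L/R as in the structure lemma. Suppose there exist rows r_1, r_2, r_3, r_4 and columns c_1, c_2, c_3, c_4 such that: entries (r_1,c_4), (r_2,c_4), (r_2,c_3) are 0-entries labeled L and all other entries of rows r_1 and r_2 are 1; entries (r_4,c_1), (r_4,c_2), (r_3,c_2) are 0-entries labeled R and all other entries of columns c_1 and c_2 are 1; row r_3 contains at least two L-labeled entries and column c_3 contains at least two R-labeled entries. Then a contradiction follows; i.e., no VCI matrix admits such a configuration. -/
import Mathlib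


/-- The forbidden configuration: with the rows and columns of a (VCI) matrix ordered and the
`0`-entries labeled `L` (encoded `true`) / `R` (encoded `false`) as in the structure lemma,
there cannot exist distinct rows `r₁,…,r₄` and distinct columns `c₁,…,c₄` such that
`(r₁,c₄),(r₂,c₄),(r₂,c₃)` are `L`-labeled `0`-entries with all other entries of rows
`r₁,r₂` equal to `1`; `(r₄,c₁),(r₄,c₂),(r₃,c₂)` are `R`-labeled `0`-entries with all other
entries of columns `c₁,c₂` equal to `1`; row `r₃` has at least two `L`-entries and column
`c₃` has at least two `R`-entries. -/
theorem forbidden_configuration {n m : ℕ} (A : Fin n → Fin m → Bool)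
    (lab : Fin n → Fin m → Bool)
    (hL : ∀ i c, A i c = false → lab i c = true →
      ∀ c', c < c' → A i c' = false ∧ lab i c' = true)
    (hR : ∀ i c, A i c = false → lab i c = false →
      ∀ i', i < i' → A i' c = false ∧ lab i' c = false)
    (r₁ r₂ r₃ r₄ : Fin n) (c₁ c₂ c₃ c₄ : Fin m)
    (hrdist : ([r₁, r₂, r₃, r₄] : List (Fin n)).Pairwise (· ≠ ·))
    (hcdist : ([c₁, c₂, c₃, c₄] : List (Fin m)).Pairwise (· ≠ ·))
    (h14 : A r₁ c₄ = false ∧ lab r₁ c₄ = true)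
    (h24 : A r₂ c₄ = false ∧ lab r₂ c₄ = true)
    (h23 : A r₂ c₃ = false ∧ lab r₂ c₃ = true)
    (hrow1 : ∀ c, c ≠ c₄ → A r₁ c = true)
    (hrow2 : ∀ c, c ≠ c₃ → c ≠ c₄ → A r₂ c = true)
    (h41 : A r₄ c₁ = false ∧ lab r₄ c₁ = false)
    (h42 : A r₄ c₂ = false ∧ lab r₄ c₂ = false)
    (h32 : A r₃ c₂ = false ∧ lab r₃ c₂ = false)
    (hcol1 : ∀ i, i ≠ r₄ → A i c₁ = true)
    (hcol2 : ∀ i, i ≠ r₃ → i ≠ r₄ → A i c₂ = true)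
    (hr3L : ∃ a b : Fin m, a ≠ b ∧ (A r₃ a = false ∧ lab r₃ a = true) ∧
      (A r₃ b = false ∧ lab r₃ b = true))
    (hc3R : ∃ u v : Fin n, u ≠ v ∧ (A u c₃ = false ∧ lab u c₃ = false) ∧
      (A v c₃ = false ∧ lab v c₃ = false)) :
    False := by
  obtain ⟨a, b, hab, ha, hb⟩ := hr3L
  obtain ⟨u, v, huv, hu, hv⟩ := hc3R
  have key : ∀ w, A w c₃ = false → lab w c₃ = false → w ≠ r₄ →
      A r₃ c₃ = false ∧ lab r₃ c₃ = false := by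
    intro w hw1 hw2 hw4
    rcases lt_trichotomy w r₃ with h | h | h
    · exact hR w c₃ hw1 hw2 r₃ h
    · rw [← h]; exact ⟨hw1, hw2⟩
    · exfalso
      have h2 := (hR r₃ c₂ h32.1 h32.2 w h).1
      have := hcol2 w (Ne.symm (ne_of_lt h)) hw4
      simp [this] at h2
  have hRr3 : A r₃ c₃ = false ∧ lab r₃ c₃ = false := by
    by_cases h : u = r₄
    · exact key v hv.1 hv.2 (fun hv4 => huv (h.trans hv4.symm))
    · exact key u hu.1 hu.2 h
  have keyL : ∀ w, A r₃ w = false → lab r₃ w = true → w ≠ c₄ →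
      lab r₃ c₃ = true := by
    intro w hw1 hw2 hw4
    rcases lt_trichotomy w c₃ with h | h | h
    · exact (hL r₃ w hw1 hw2 c₃ h).2
    · rw [← h]; exact hw2
    · exfalso
      have h2 := (hL r₂ c₃ h23.1 h23.2 w h).1
      have := hrow2 w (Ne.symm (ne_of_lt h)) hw4
      simp [this] at h2
  have hLr3 : lab r₃ c₃ = true := by
    by_cases h : a = c₄
    · exact keyL b hb.1 hb.2 (fun hb4 => hab (h.trans hb4.symm))
    · exact keyL a ha.1 ha.2 h
  simp [hLr3] at hRr3
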